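/- arXiv:2010.05840 — 2 statements merged into one kernel-verified Lean document; each statement's English description precedes it below -/
import Mathlib

section
/- Let (P, μ) be a nonzero finite measure space and T : P → P an ergodic measure-preserving transformation. For each n ∈ ℕ let R_n : P → ℝ be measurable, and set Q_n = R_n ∘ T − R_n. Assume Q_n converges to zero in probability with respect to μ, i.e. for every ε > 0, μ{x ∈ P : |Q_n(x)| ≥ ε} → 0 as n → ∞. Let ψ be a Borel probability measure on ℝ. If there exists a probability measure ν₀ on P absolutely continuous with respect to μ such that the pushforward measures (ν₀).map(R_n) converge weakly to ψ, then for every probability measure ν on P absolutely continuous with respect to μ, the pushforwards ν.map(R_n) converge weakly to ψ. -/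
open MeasureTheory Filter Topology BoundedContinuousFunction
open scoped ENNReal NNReal

section SDCAux

variable {P : Type*} [MeasurableSpace P] {μ : Measure P} [IsFiniteMeasure μ]

lemma sdc_integrable {φ : P → ℝ} (hm : AEStronglyMeasurable φ μ) {C : ℝ}
    (hb : ∀ x, |φ x| ≤ C) : Integrable φ μ :=
  ⟨hm, HasFiniteIntegral.of_bounded (C := C)
    (Eventually.of_forall fun x => by simpa [Real.norm_eq_abs] using hb x)⟩

/-- Key step 1: L¹ convergence of `|f ∘ Rₙ ∘ T - f ∘ Rₙ|` for Lipschitz `f`. -/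
lemma sdc_key1 {T : P → P} (hTm : Measurable T)
    {R : ℕ → P → ℝ} (hRmeas : ∀ n, Measurable (R n))
    (hQ : ∀ ε : ℝ, 0 < ε → Tendsto (fun n => μ {x | ε ≤ |R n (T x) - R n x|}) atTop (𝓝 0))
    (f : ℝ →ᵇ ℝ) {K : NNReal} (hf : LipschitzWith K ⇑f) :
    Tendsto (fun n => ∫ x, |f (R n (T x)) - f (R n x)| ∂μ) atTop (𝓝 0) := by
  rw [NormedAddCommGroup.tendsto_nhds_zero]
  intro ε hε
  set m : ℝ := (μ Set.univ).toReal with hm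
  have hm0 : 0 ≤ m := ENNReal.toReal_nonneg
  set B : ℝ := ‖f‖ with hB
  have hB0 : (0:ℝ) ≤ B := norm_nonneg f
  have hKpos : (0:ℝ) ≤ (K:ℝ) := K.coe_nonneg
  set δ : ℝ := ε / (2 * ((K:ℝ) + 1) * (m + 1)) with hδdef
  have hδ : 0 < δ := by positivity
  have h1 : (K:ℝ) * δ * m ≤ ε / 2 := by
    have hden : (0:ℝ) < 2 * ((K:ℝ) + 1) * (m + 1) := by positivity
    have : (K:ℝ) * δ * m = ((K:ℝ) * m / (2 * ((K:ℝ) + 1) * (m + 1))) * ε := by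
      rw [hδdef]; ring
    rw [this]
    have hfac : (K:ℝ) * m / (2 * ((K:ℝ) + 1) * (m + 1)) ≤ 1 / 2 := by
      rw [div_le_div_iff₀ hden two_pos]
      nlinarith
    calc ((K:ℝ) * m / (2 * ((K:ℝ) + 1) * (m + 1))) * ε ≤ (1/2) * ε :=
          mul_le_mul_of_nonneg_right hfac hε.le
      _ = ε / 2 := by ring
  have hc : (0:ℝ≥0∞) < ENNReal.ofReal (ε / (2 * (2 * B + 1))) :=
    ENNReal.ofReal_pos.mpr (by positivity)
  filter_upwards [(hQ δ hδ).eventually_lt_const hc] with n hn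
  set S : Set P := {x | δ ≤ |R n (T x) - R n x|} with hS
  have hmRn : Measurable fun x => |R n (T x) - R n x| :=
    (((hRmeas n).comp hTm).sub (hRmeas n)).abs
  have hSmeas : MeasurableSet S := measurableSet_le measurable_const hmRn
  have hμS : (μ S).toReal < ε / (2 * (2 * B + 1)) := by
    rw [← ENNReal.lt_ofReal_iff_toReal_lt (measure_ne_top μ S)]
    exact hn
  have hmeasn : Measurable fun x => |f (R n (T x)) - f (R n x)| :=
    ((f.continuous.measurable.comp ((hRmeas n).comp hTm)).sub
      (f.continuous.measurable.comp (hRmeas n))).abs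
  have hpt : ∀ x, |f (R n (T x)) - f (R n x)| ≤ (K:ℝ) * δ + S.indicator (fun _ => 2 * B) x := by
    intro x
    by_cases hx : x ∈ S
    · have h2 : |f (R n (T x)) - f (R n x)| ≤ 2 * B := by
        calc |f (R n (T x)) - f (R n x)| ≤ |f (R n (T x))| + |f (R n x)| := abs_sub _ _
          _ ≤ B + B := add_le_add (f.norm_coe_le_norm _) (f.norm_coe_le_norm _)
          _ = 2 * B := by ring
      have : S.indicator (fun _ => 2 * B) x = 2 * B := Set.indicator_of_mem hx _
      rw [this]
      nlinarith
    · have hxlt : |R n (T x) - R n x| < δ := by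
        simpa [hS, not_le] using hx
      have hlip : |f (R n (T x)) - f (R n x)| ≤ (K:ℝ) * |R n (T x) - R n x| := by
        have := hf.dist_le_mul (R n (T x)) (R n x)
        simpa [Real.dist_eq] using this
      have : S.indicator (fun _ => 2 * B) x = 0 := Set.indicator_of_notMem hx _
      rw [this, add_zero]
      calc |f (R n (T x)) - f (R n x)| ≤ (K:ℝ) * |R n (T x) - R n x| := hlip
        _ ≤ (K:ℝ) * δ := by nlinarith
  have hintR : Integrable (fun x => (K:ℝ) * δ + S.indicator (fun _ => 2 * B) x) μ :=
    (integrable_const _).add ((integrable_const (2 * B)).indicator hSmeas)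
  have hintL : Integrable (fun x => |f (R n (T x)) - f (R n x)|) μ := by
    refine sdc_integrable hmeasn.aestronglyMeasurable (C := 2 * B) fun x => ?_
    rw [abs_abs]
    calc |f (R n (T x)) - f (R n x)| ≤ |f (R n (T x))| + |f (R n x)| := abs_sub _ _
      _ ≤ B + B := add_le_add (f.norm_coe_le_norm _) (f.norm_coe_le_norm _)
      _ = 2 * B := by ring
  have hIbound : ∫ x, |f (R n (T x)) - f (R n x)| ∂μ ≤ (K:ℝ) * δ * m + 2 * B * (μ S).toReal := by
    calc ∫ x, |f (R n (T x)) - f (R n x)| ∂μ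
        ≤ ∫ x, ((K:ℝ) * δ + S.indicator (fun _ => 2 * B) x) ∂μ :=
          integral_mono hintL hintR hpt
      _ = (K:ℝ) * δ * m + 2 * B * (μ S).toReal := by
          rw [integral_add (integrable_const _) ((integrable_const (2 * B)).indicator hSmeas),
            integral_const, integral_indicator_const _ hSmeas]
          simp [smul_eq_mul, hm, measureReal_def]
          ring
  have hInn : 0 ≤ ∫ x, |f (R n (T x)) - f (R n x)| ∂μ := integral_nonneg fun x => abs_nonneg _
  rw [Real.norm_eq_abs, abs_of_nonneg hInn]
  have h2 : 2 * B * (μ S).toReal < ε / 2 := by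
    have h21 : 2 * B * (μ S).toReal ≤ (2 * B + 1) * (μ S).toReal := by
      nlinarith [ENNReal.toReal_nonneg (a := μ S)]
    have h22 : (2 * B + 1) * (μ S).toReal < (2 * B + 1) * (ε / (2 * (2 * B + 1))) :=
      mul_lt_mul_of_pos_left hμS (by positivity)
    have h23 : (2 * B + 1) * (ε / (2 * (2 * B + 1))) = ε / 2 := by
      field_simp
    linarith
  linarith


/-- Key step 2: comparing against iterates. -/
lemma sdc_key2 {T : P → P} (hTmp : MeasurePreserving T μ μ)
    {R : ℕ → P → ℝ} (hRmeas : ∀ n, Measurable (R n))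
    (f : ℝ →ᵇ ℝ)
    (hL1 : Tendsto (fun n => ∫ x, |f (R n (T x)) - f (R n x)| ∂μ) atTop (𝓝 0))
    {g : P → ℝ} (hgm : Measurable g) {M : ℝ} (hgb : ∀ x, |g x| ≤ M) (k : ℕ) :
    Tendsto (fun n => (∫ x, f (R n x) * g (T^[k] x) ∂μ) - ∫ x, f (R n x) * g x ∂μ)
      atTop (𝓝 0) := by
  have hTm : Measurable T := hTmp.measurable
  have hgiter : ∀ j : ℕ, Measurable fun x => g (T^[j] x) := fun j =>
    hgm.comp (hTmp.iterate j).measurable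
  have hprod : ∀ (n : ℕ) (j : ℕ), Integrable (fun x => f (R n x) * g (T^[j] x)) μ := by
    intro n j
    refine sdc_integrable ((f.continuous.measurable.comp (hRmeas n)).mul (hgiter j)).aestronglyMeasurable
      (C := ‖f‖ * M) fun x => ?_
    rw [abs_mul]
    exact mul_le_mul (f.norm_coe_le_norm _) (hgb _) (abs_nonneg _) (norm_nonneg f)
  induction k with
  | zero => simpa using (tendsto_const_nhds : Tendsto (fun _ : ℕ => (0:ℝ)) atTop (𝓝 0))
  | succ k ih =>
    have hprod0 : ∀ n : ℕ, Integrable (fun x => f (R n x) * g x) μ := by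
      intro n; simpa using hprod n 0
    have step : Tendsto (fun n => (∫ x, f (R n x) * g (T^[k+1] x) ∂μ)
        - ∫ x, f (R n x) * g (T^[k] x) ∂μ) atTop (𝓝 0) := by
      have key : ∀ n, (∫ x, f (R n x) * g (T^[k] x) ∂μ)
          = ∫ x, f (R n (T x)) * g (T^[k+1] x) ∂μ := by
        intro n
        have h1 : (∫ x, f (R n x) * g (T^[k] x) ∂μ)
            = ∫ x, f (R n x) * g (T^[k] x) ∂(μ.map T) := by rw [hTmp.map_eq]
        have hmap : AEStronglyMeasurable (fun x => f (R n x) * g (T^[k] x)) (μ.map T) := by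
          rw [hTmp.map_eq]
          exact ((f.continuous.measurable.comp (hRmeas n)).mul (hgiter k)).aestronglyMeasurable
        rw [h1, integral_map hTm.aemeasurable hmap]
        refine integral_congr_ae (Eventually.of_forall fun x => ?_)
        simp only [Function.iterate_succ_apply]
      have hdiff : ∀ n, (∫ x, f (R n x) * g (T^[k+1] x) ∂μ)
          - ∫ x, f (R n x) * g (T^[k] x) ∂μ
          = ∫ x, (f (R n x) - f (R n (T x))) * g (T^[k+1] x) ∂μ := by
        intro n
        rw [key n]
        have hint2 : Integrable (fun x => f (R n (T x)) * g (T^[k+1] x)) μ := by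
          refine sdc_integrable (((f.continuous.measurable.comp ((hRmeas n).comp hTm))).mul
            (hgiter (k+1))).aestronglyMeasurable (C := ‖f‖ * M) fun x => ?_
          rw [abs_mul]
          exact mul_le_mul (f.norm_coe_le_norm _) (hgb _) (abs_nonneg _) (norm_nonneg f)
        rw [← integral_sub (hprod n (k+1)) hint2]
        refine integral_congr_ae (Eventually.of_forall fun x => ?_)
        ring
      have hbound : ∀ n, ‖(∫ x, f (R n x) * g (T^[k+1] x) ∂μ)
          - ∫ x, f (R n x) * g (T^[k] x) ∂μ‖
          ≤ (∫ x, |f (R n (T x)) - f (R n x)| ∂μ) * M := by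
        intro n
        rw [hdiff n]
        have habs : ∀ x, |(f (R n x) - f (R n (T x))) * g (T^[k+1] x)|
            ≤ |f (R n (T x)) - f (R n x)| * M := by
          intro x
          rw [abs_mul, abs_sub_comm]
          exact mul_le_mul_of_nonneg_left (hgb _) (abs_nonneg _)
        have hi1 : Integrable (fun x => |(f (R n x) - f (R n (T x))) * g (T^[k+1] x)|) μ := by
          refine sdc_integrable ?_ (C := 2 * ‖f‖ * M) fun x => ?_
          · exact (((f.continuous.measurable.comp (hRmeas n)).sub
              (f.continuous.measurable.comp ((hRmeas n).comp hTm))).mul (hgiter (k+1))).abs.aestronglyMeasurable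
          · rw [abs_abs, abs_mul]
            have h1 : |f (R n x) - f (R n (T x))| ≤ 2 * ‖f‖ := by
              calc |f (R n x) - f (R n (T x))| ≤ |f (R n x)| + |f (R n (T x))| := abs_sub _ _
                _ ≤ ‖f‖ + ‖f‖ := add_le_add (f.norm_coe_le_norm _) (f.norm_coe_le_norm _)
                _ = 2 * ‖f‖ := by ring
            have hM0 : 0 ≤ M := le_trans (abs_nonneg _) (hgb x)
            exact mul_le_mul h1 (hgb _) (abs_nonneg _) (by positivity)
        have hi2 : Integrable (fun x => |f (R n (T x)) - f (R n x)| * M) μ := by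
          refine sdc_integrable ?_ (C := 2 * ‖f‖ * |M|) fun x => ?_
          · exact (((f.continuous.measurable.comp ((hRmeas n).comp hTm)).sub
              (f.continuous.measurable.comp (hRmeas n))).abs.mul measurable_const).aestronglyMeasurable
          · rw [abs_mul, abs_abs]
            have h1 : |f (R n (T x)) - f (R n x)| ≤ 2 * ‖f‖ := by
              calc |f (R n (T x)) - f (R n x)| ≤ |f (R n (T x))| + |f (R n x)| := abs_sub _ _
                _ ≤ ‖f‖ + ‖f‖ := add_le_add (f.norm_coe_le_norm _) (f.norm_coe_le_norm _)
                _ = 2 * ‖f‖ := by ring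
            exact mul_le_mul_of_nonneg_right h1 (abs_nonneg _) |>.trans (le_refl _) |>.trans (by rfl)
        calc ‖∫ x, (f (R n x) - f (R n (T x))) * g (T^[k+1] x) ∂μ‖
            ≤ ∫ x, |(f (R n x) - f (R n (T x))) * g (T^[k+1] x)| ∂μ := by
              have h := norm_integral_le_integral_norm (μ := μ)
                (fun x => (f (R n x) - f (R n (T x))) * g (T^[k+1] x))
              simp only [Real.norm_eq_abs] at h
              exact h
          _ ≤ ∫ x, |f (R n (T x)) - f (R n x)| * M ∂μ := integral_mono hi1 hi2 habs
          _ = (∫ x, |f (R n (T x)) - f (R n x)| ∂μ) * M := integral_mul_const M _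
      have hlim : Tendsto (fun n => (∫ x, |f (R n (T x)) - f (R n x)| ∂μ) * M) atTop (𝓝 0) := by
        simpa using hL1.mul_const M
      exact squeeze_zero_norm hbound hlim
    have := ih.add step
    rw [add_zero] at this
    refine this.congr fun n => ?_
    ring

/-- Key step 3: L¹ mean ergodic theorem for bounded functions, via the Hilbert-space
von Neumann mean ergodic theorem. -/
lemma sdc_key3 {T : P → P} (hT : Ergodic T μ)
    {g : P → ℝ} (hgm : Measurable g) {M : ℝ} (hgb : ∀ x, |g x| ≤ M) :
    ∃ c : ℝ, c * (μ Set.univ).toReal = ∫ x, g x ∂μ ∧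
      Tendsto (fun N => ∫ x, |birkhoffAverage ℝ T g N x - c| ∂μ) atTop (𝓝 0) := by
  have hTmp : MeasurePreserving T μ μ := hT.toMeasurePreserving
  have hgm2 : MemLp g 2 μ :=
    MemLp.of_bound hgm.aestronglyMeasurable M
      (Eventually.of_forall fun x => by simpa [Real.norm_eq_abs] using hgb x)
  set xg : Lp ℝ 2 μ := hgm2.toLp g with hxg
  set U : Lp ℝ 2 μ →L[ℝ] Lp ℝ 2 μ :=
    (Lp.compMeasurePreservingₗᵢ ℝ T hTmp).toContinuousLinearMap with hU
  have hUnorm : ‖U‖ ≤ 1 := LinearIsometry.norm_toContinuousLinearMap_le _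
  have hUapply : ∀ w : Lp ℝ 2 μ, ⇑(U w) =ᵐ[μ] ⇑w ∘ T := fun w =>
    Lp.coeFn_compMeasurePreserving w hTmp
  have hlim := U.tendsto_birkhoffAverage_orthogonalProjection hUnorm xg
  set y : Lp ℝ 2 μ := (Submodule.orthogonalProjectionOnto (LinearMap.eqLocus (U : Lp ℝ 2 μ →ₗ[ℝ] Lp ℝ 2 μ) ((1 : Lp ℝ 2 μ →L[ℝ] Lp ℝ 2 μ) : Lp ℝ 2 μ →ₗ[ℝ] Lp ℝ 2 μ)) xg : Lp ℝ 2 μ) with hy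
  have hyfix : U y = y := by
    have hmem := (Submodule.orthogonalProjectionOnto (LinearMap.eqLocus (U : Lp ℝ 2 μ →ₗ[ℝ] Lp ℝ 2 μ) ((1 : Lp ℝ 2 μ →L[ℝ] Lp ℝ 2 μ) : Lp ℝ 2 μ →ₗ[ℝ] Lp ℝ 2 μ)) xg).2
    rw [LinearMap.mem_eqLocus] at hmem
    simpa [hy] using hmem
  have hyT : ⇑y ∘ T =ᵐ[μ] ⇑y := by
    have h1 : ⇑(U y) =ᵐ[μ] ⇑y ∘ T := hUapply y
    rw [hyfix] at h1
    exact h1.symm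
  obtain ⟨c, hc⟩ := hT.ae_eq_const_of_ae_eq_comp₀
    ((Lp.aestronglyMeasurable y).aemeasurable.nullMeasurable) hyT
  -- pointwise identification of iterates
  have hiter : ∀ k : ℕ, ⇑((⇑U)^[k] xg) =ᵐ[μ] fun x => g (T^[k] x) := by
    intro k
    induction k with
    | zero => simpa using hgm2.coeFn_toLp
    | succ k ih =>
      rw [Function.iterate_succ_apply']
      calc ⇑(U ((⇑U)^[k] xg)) =ᵐ[μ] ⇑((⇑U)^[k] xg) ∘ T := hUapply _
        _ =ᵐ[μ] (fun x => g (T^[k] x)) ∘ T :=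
            hTmp.quasiMeasurePreserving.ae_eq_comp ih
        _ =ᵐ[μ] fun x => g (T^[k+1] x) := by
            refine Eventually.of_forall fun x => ?_
            simp [Function.comp, Function.iterate_succ_apply]
  have hsum : ∀ N : ℕ, ⇑(birkhoffSum (⇑U) id N xg) =ᵐ[μ] birkhoffSum T g N := by
    intro N
    induction N with
    | zero =>
      have h0 : birkhoffSum (⇑U) id 0 xg = 0 := by simp [birkhoffSum]
      rw [h0]
      refine (Lp.coeFn_zero ℝ 2 μ).trans (Eventually.of_forall fun x => ?_)
      simp [birkhoffSum]
    | succ N ih =>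
      have h0 : birkhoffSum (⇑U) id (N+1) xg = birkhoffSum (⇑U) id N xg + (⇑U)^[N] xg :=
        birkhoffSum_succ _ _ _ _
      rw [h0]
      calc ⇑(birkhoffSum (⇑U) id N xg + (⇑U)^[N] xg)
          =ᵐ[μ] ⇑(birkhoffSum (⇑U) id N xg) + ⇑((⇑U)^[N] xg) := Lp.coeFn_add _ _
        _ =ᵐ[μ] (birkhoffSum T g N) + fun x => g (T^[N] x) := ih.add (hiter N)
        _ =ᵐ[μ] birkhoffSum T g (N+1) := by
            refine Eventually.of_forall fun x => ?_
            exact (birkhoffSum_succ T g N x).symm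
  have havg : ∀ N : ℕ, ⇑(birkhoffAverage ℝ (⇑U) id N xg) =ᵐ[μ] birkhoffAverage ℝ T g N := by
    intro N
    have h1 : birkhoffAverage ℝ (⇑U) id N xg = ((N:ℝ)⁻¹) • birkhoffSum (⇑U) id N xg := rfl
    rw [h1]
    calc ⇑(((N:ℝ)⁻¹) • birkhoffSum (⇑U) id N xg)
        =ᵐ[μ] ((N:ℝ)⁻¹) • ⇑(birkhoffSum (⇑U) id N xg) := Lp.coeFn_smul _ _
      _ =ᵐ[μ] birkhoffAverage ℝ T g N := by
          filter_upwards [hsum N] with x hx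
          simp [birkhoffAverage, hx]
  -- the L¹ estimate
  set Cμ : ℝ := ((μ Set.univ) ^ ((2:ℝ)⁻¹)).toReal with hCμ
  have hJle : ∀ N : ℕ, ∫ x, |birkhoffAverage ℝ T g N x - c| ∂μ
      ≤ ‖birkhoffAverage ℝ (⇑U) id N xg - y‖ * Cμ := by
    intro N
    set w : Lp ℝ 2 μ := birkhoffAverage ℝ (⇑U) id N xg - y with hw
    have hwf : ⇑w =ᵐ[μ] fun x => birkhoffAverage ℝ T g N x - c := by
      calc ⇑w =ᵐ[μ] ⇑(birkhoffAverage ℝ (⇑U) id N xg) - ⇑y := Lp.coeFn_sub _ _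
        _ =ᵐ[μ] fun x => birkhoffAverage ℝ T g N x - c := by
            filter_upwards [havg N, hc] with x h1 h2
            simp [h1, h2]
    have h1 : ∫ x, |birkhoffAverage ℝ T g N x - c| ∂μ = ∫ x, ‖w x‖ ∂μ := by
      refine integral_congr_ae ?_
      filter_upwards [hwf] with x hx
      simp [hx, Real.norm_eq_abs]
    have h2 : ∫ x, ‖w x‖ ∂μ = (eLpNorm (⇑w) 1 μ).toReal := by
      rw [integral_norm_eq_lintegral_enorm (Lp.aestronglyMeasurable w),
        eLpNorm_one_eq_lintegral_enorm]
    have h3 : eLpNorm (⇑w) 1 μ ≤ eLpNorm (⇑w) 2 μ * (μ Set.univ) ^ ((2:ℝ)⁻¹) := by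
      have := eLpNorm_le_eLpNorm_mul_rpow_measure_univ (μ := μ) (f := ⇑w)
        (p := 1) (q := 2) (by norm_num) (Lp.aestronglyMeasurable w)
      convert this using 2
      norm_num
    have h4 : (eLpNorm (⇑w) 1 μ).toReal
        ≤ (eLpNorm (⇑w) 2 μ).toReal * Cμ := by
      rw [hCμ, ← ENNReal.toReal_mul]
      refine ENNReal.toReal_mono ?_ h3
      exact ENNReal.mul_ne_top (Lp.eLpNorm_ne_top w)
        (ENNReal.rpow_ne_top_of_nonneg (by norm_num) (measure_ne_top μ _))
    rw [h1, h2]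
    calc (eLpNorm (⇑w) 1 μ).toReal ≤ (eLpNorm (⇑w) 2 μ).toReal * Cμ := h4
      _ = ‖w‖ * Cμ := by rw [Lp.norm_def]
  have hJ : Tendsto (fun N => ∫ x, |birkhoffAverage ℝ T g N x - c| ∂μ) atTop (𝓝 0) := by
    refine squeeze_zero (fun N => integral_nonneg fun x => abs_nonneg _) hJle ?_
    have h1 : Tendsto (fun N => ‖birkhoffAverage ℝ (⇑U) id N xg - y‖) atTop (𝓝 0) :=
      tendsto_iff_norm_sub_tendsto_zero.mp hlim
    simpa using h1.mul_const Cμ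
  -- integrability of Birkhoff averages
  have hint_iterate : ∀ k : ℕ, Integrable (fun x => g (T^[k] x)) μ := by
    intro k
    exact ⟨(hgm.comp (hTmp.iterate k).measurable).aestronglyMeasurable,
      HasFiniteIntegral.of_bounded (C := M)
        (Eventually.of_forall fun x => by simpa [Real.norm_eq_abs] using hgb _)⟩
  have hAint : ∀ N : ℕ, Integrable (birkhoffAverage ℝ T g N) μ := by
    intro N
    have h1 : Integrable (fun x => ∑ k ∈ Finset.range N, g (T^[k] x)) μ :=
      integrable_finset_sum _ fun k _ => hint_iterate k
    have h2 := h1.smul ((N:ℝ)⁻¹)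
    refine h2.congr (Eventually.of_forall fun x => ?_)
    simp [birkhoffAverage, birkhoffSum, smul_eq_mul]
  -- integral of Birkhoff average equals integral of g (for N ≥ 1)
  have hint_eq : ∀ k : ℕ, ∫ x, g (T^[k] x) ∂μ = ∫ x, g x ∂μ := by
    intro k
    have hmp := hTmp.iterate k
    have hmap : AEStronglyMeasurable g (μ.map (T^[k])) := by
      rw [hmp.map_eq]; exact hgm.aestronglyMeasurable
    rw [← integral_map hmp.measurable.aemeasurable hmap, hmp.map_eq]
  have hAint_eq : ∀ N : ℕ, 1 ≤ N → ∫ x, birkhoffAverage ℝ T g N x ∂μ = ∫ x, g x ∂μ := by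
    intro N hN
    have h1 : ∫ x, birkhoffAverage ℝ T g N x ∂μ
        = (N:ℝ)⁻¹ * ∫ x, ∑ k ∈ Finset.range N, g (T^[k] x) ∂μ := by
      rw [← integral_const_mul]
      refine integral_congr_ae (Eventually.of_forall fun x => ?_)
      simp [birkhoffAverage, birkhoffSum, smul_eq_mul]
    rw [h1, integral_finset_sum _ fun k _ => hint_iterate k]
    have h2 : ∀ k ∈ Finset.range N, ∫ x, g (T^[k] x) ∂μ = ∫ x, g x ∂μ := fun k _ => hint_eq k
    rw [Finset.sum_congr rfl h2, Finset.sum_const, Finset.card_range, nsmul_eq_mul]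
    have hN0 : (N:ℝ) ≠ 0 := Nat.cast_ne_zero.mpr (by omega)
    field_simp
  -- identify c
  have hlim2 : Tendsto (fun N => ∫ x, birkhoffAverage ℝ T g N x ∂μ) atTop
      (𝓝 (c * (μ Set.univ).toReal)) := by
    rw [tendsto_iff_norm_sub_tendsto_zero]
    refine squeeze_zero (fun N => norm_nonneg _) (fun N => ?_) hJ
    have h1 : (∫ x, birkhoffAverage ℝ T g N x ∂μ) - c * (μ Set.univ).toReal
        = ∫ x, (birkhoffAverage ℝ T g N x - c) ∂μ := by
      rw [integral_sub (hAint N) (integrable_const c), integral_const]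
      simp [smul_eq_mul, mul_comm, measureReal_def]
    rw [Real.norm_eq_abs, h1]
    have h := norm_integral_le_integral_norm (μ := μ) (fun x => birkhoffAverage ℝ T g N x - c)
    simpa [Real.norm_eq_abs] using h
  have hceq : c * (μ Set.univ).toReal = ∫ x, g x ∂μ := by
    have h2 : Tendsto (fun N => ∫ x, birkhoffAverage ℝ T g N x ∂μ) atTop (𝓝 (∫ x, g x ∂μ)) := by
      refine Tendsto.congr' ?_ tendsto_const_nhds
      filter_upwards [eventually_ge_atTop 1] with N hN
      exact (hAint_eq N hN).symm
    exact tendsto_nhds_unique hlim2 h2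
  exact ⟨c, hceq, hJ⟩

/-- Key step A: `∫ f(Rₙ) g dμ → 0` for integrable mean-zero `g`. -/
lemma sdc_keyA {T : P → P} (hT : Ergodic T μ)
    {R : ℕ → P → ℝ} (hRmeas : ∀ n, Measurable (R n))
    (f : ℝ →ᵇ ℝ)
    (hL1 : Tendsto (fun n => ∫ x, |f (R n (T x)) - f (R n x)| ∂μ) atTop (𝓝 0))
    {g : P → ℝ} (hgm : Measurable g) (hgi : Integrable g μ) (hg0 : ∫ x, g x ∂μ = 0) :
    Tendsto (fun n => ∫ x, f (R n x) * g x ∂μ) atTop (𝓝 0) := by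
  have hTmp : MeasurePreserving T μ μ := hT.toMeasurePreserving
  set B : ℝ := ‖f‖ + 1 with hBdef
  have hB1 : (1:ℝ) ≤ B := by have := norm_nonneg f; simp only [hBdef]; linarith
  have hB0 : (0:ℝ) < B := lt_of_lt_of_le one_pos hB1
  -- the uniform bound for the functionals
  have hfu : ∀ (n : ℕ) (u : P → ℝ), Integrable u μ →
      Integrable (fun x => f (R n x) * u x) μ := by
    intro n u hu
    exact hu.bdd_mul (f.continuous.measurable.comp (hRmeas n)).aestronglyMeasurable
      (c := ‖f‖) (Eventually.of_forall fun x => f.norm_coe_le_norm _)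
  have habs : ∀ (n : ℕ) (u : P → ℝ), Integrable u μ →
      |∫ x, f (R n x) * u x ∂μ| ≤ B * ∫ x, |u x| ∂μ := by
    intro n u hu
    have h1 : |∫ x, f (R n x) * u x ∂μ| ≤ ∫ x, |f (R n x) * u x| ∂μ := by
      have h := norm_integral_le_integral_norm (μ := μ) (fun x => f (R n x) * u x)
      simp only [Real.norm_eq_abs] at h
      exact h
    have h2 : ∫ x, |f (R n x) * u x| ∂μ ≤ ∫ x, B * |u x| ∂μ := by
      refine integral_mono (hfu n u hu).abs (hu.abs.const_mul B) fun x => ?_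
      rw [abs_mul]
      refine mul_le_mul ?_ le_rfl (abs_nonneg _) hB0.le
      calc |f (R n x)| ≤ ‖f‖ := f.norm_coe_le_norm _
        _ ≤ B := by simp [hBdef]
    rw [integral_const_mul] at h2
    linarith
  rw [NormedAddCommGroup.tendsto_nhds_zero]
  intro ε hε
  set δ : ℝ := ε / (5 * B) with hδdef
  have hδpos : 0 < δ := by positivity
  -- truncation
  set gt : ℕ → P → ℝ := fun j x => max (min (g x) (j:ℝ)) (-(j:ℝ)) with hgt
  have hgtm : ∀ j, Measurable (gt j) := fun j =>
    (hgm.min measurable_const).max measurable_const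
  have hgtb : ∀ j x, |gt j x| ≤ (j:ℝ) := by
    intro j x
    rw [abs_le]
    constructor
    · exact le_max_right _ _
    · exact max_le (le_trans (min_le_right _ _) le_rfl)
        (by simpa using (Nat.cast_nonneg j : (0:ℝ) ≤ j))
  have hdiff_le : ∀ j x, |g x - gt j x| ≤ |g x| := by
    intro j x
    have hj0 : (0:ℝ) ≤ (j:ℝ) := Nat.cast_nonneg j
    rcases le_total 0 (g x) with h | h
    · have h1 : gt j x = min (g x) (j:ℝ) := by
        refine max_eq_left (le_trans (by linarith) (le_min h hj0))
      rw [h1, abs_of_nonneg (by simpa using min_le_left (g x) (j:ℝ) : (0:ℝ) ≤ g x - min (g x) (j:ℝ)), abs_of_nonneg h]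
      have := le_min h hj0
      linarith [min_le_left (g x) (j:ℝ)]
    · have hminj : min (g x) (j:ℝ) = g x := min_eq_left (le_trans h hj0)
      have h1 : gt j x = max (g x) (-(j:ℝ)) := by rw [hgt]; simp [hminj]
      rw [h1]
      have h2 : g x - max (g x) (-(j:ℝ)) ≤ 0 := by
        simp [le_max_left]
      rw [abs_of_nonpos h2, abs_of_nonpos h]
      have h3 : max (g x) (-(j:ℝ)) ≤ 0 := max_le h (by linarith)
      linarith
  have hgtint : ∀ j, Integrable (gt j) μ := fun j =>
    sdc_integrable (hgtm j).aestronglyMeasurable (hgtb j)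
  have htrunc : Tendsto (fun j => ∫ x, |g x - gt j x| ∂μ) atTop (𝓝 0) := by
    have h0 : (0:ℝ) = ∫ x, (0:ℝ) ∂μ := by simp
    rw [h0]
    refine tendsto_integral_of_dominated_convergence (fun x => |g x|)
      (fun j => ((hgm.sub (hgtm j)).abs).aestronglyMeasurable) hgi.abs
      (fun j => Eventually.of_forall fun x => by
        simpa [Real.norm_eq_abs, abs_abs] using hdiff_le j x)
      (Eventually.of_forall fun x => ?_)
    obtain ⟨j₀, hj₀⟩ := exists_nat_ge |g x|
    refine Tendsto.congr' ?_ tendsto_const_nhds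
    filter_upwards [eventually_ge_atTop j₀] with j hj
    have hjx : |g x| ≤ (j:ℝ) := le_trans hj₀ (by exact_mod_cast hj)
    rw [abs_le] at hjx
    have : gt j x = g x := by
      rw [hgt]
      simp only []
      rw [min_eq_left hjx.2, max_eq_left (by linarith [hjx.1])]
    simp [this]
  obtain ⟨j, hj⟩ := (htrunc.eventually_lt_const hδpos).exists
  set h : P → ℝ := gt j with hh
  have hgh : ∫ x, |g x - h x| ∂μ < δ := hj
  -- mean ergodic theorem applied to h
  obtain ⟨c, hceq, hJ⟩ := sdc_key3 hT (hgtm j) (hgtb j)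
  obtain ⟨N, hN1, hJN⟩ : ∃ N : ℕ, 1 ≤ N ∧ ∫ x, |birkhoffAverage ℝ T h N x - c| ∂μ < δ := by
    obtain ⟨N₀, hN₀⟩ := eventually_atTop.mp (hJ.eventually_lt_const hδpos)
    exact ⟨max N₀ 1, le_max_right _ _, hN₀ _ (le_max_left _ _)⟩
  -- |c| is small
  have hcm : |c| * (μ Set.univ).toReal ≤ δ := by
    have h1 : ∫ x, h x ∂μ = ∫ x, (h x - g x) ∂μ := by
      rw [integral_sub (hgtint j) hgi, hg0, sub_zero]
    have h2 : |∫ x, h x ∂μ| ≤ ∫ x, |g x - h x| ∂μ := by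
      rw [h1]
      have h3 := norm_integral_le_integral_norm (μ := μ) (fun x => h x - g x)
      simp only [Real.norm_eq_abs] at h3
      exact le_trans h3 (le_of_eq (integral_congr_ae
        (Eventually.of_forall fun x => abs_sub_comm _ _)))
    have h4 : |c| * (μ Set.univ).toReal = |c * (μ Set.univ).toReal| := by
      rw [abs_mul, abs_of_nonneg ENNReal.toReal_nonneg]
    rw [h4, hceq]
    linarith
  -- integrability of the Birkhoff average
  have hAdef : birkhoffAverage ℝ T h N
      = fun x => ((N:ℝ)⁻¹) * ∑ k ∈ Finset.range N, h (T^[k] x) := by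
    funext x
    simp [birkhoffAverage, birkhoffSum, smul_eq_mul]
  have hAmeas : Measurable (birkhoffAverage ℝ T h N) := by
    have h1 : Measurable fun x => ∑ k ∈ Finset.range N, h (T^[k] x) :=
      Finset.measurable_sum _ fun k _ => (hgtm j).comp (hTmp.iterate k).measurable
    have h2 : Measurable fun x => ((N:ℝ)⁻¹) * ∑ k ∈ Finset.range N, h (T^[k] x) :=
      h1.const_mul _
    rw [hAdef]
    exact h2
  have hAb : ∀ x, |birkhoffAverage ℝ T h N x| ≤ (j:ℝ) := by
    intro x
    have h1 : |∑ k ∈ Finset.range N, h (T^[k] x)| ≤ (N:ℝ) * (j:ℝ) := by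
      calc |∑ k ∈ Finset.range N, h (T^[k] x)| ≤ ∑ k ∈ Finset.range N, |h (T^[k] x)| :=
            Finset.abs_sum_le_sum_abs _ _
        _ ≤ ∑ _k ∈ Finset.range N, (j:ℝ) := Finset.sum_le_sum fun k _ => hgtb j _
        _ = (N:ℝ) * (j:ℝ) := by simp [mul_comm]
    have hN0 : (0:ℝ) < (N:ℝ) := by exact_mod_cast hN1
    have h2 : birkhoffAverage ℝ T h N x = (N:ℝ)⁻¹ * ∑ k ∈ Finset.range N, h (T^[k] x) := by
      simp [birkhoffAverage, birkhoffSum, smul_eq_mul]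
    rw [h2, abs_mul, abs_of_nonneg (by positivity : (0:ℝ) ≤ (N:ℝ)⁻¹)]
    calc (N:ℝ)⁻¹ * |∑ k ∈ Finset.range N, h (T^[k] x)| ≤ (N:ℝ)⁻¹ * ((N:ℝ) * (j:ℝ)) := by
          exact mul_le_mul_of_nonneg_left h1 (by positivity)
      _ = (j:ℝ) := by field_simp
  have hAint : Integrable (birkhoffAverage ℝ T h N) μ :=
    sdc_integrable hAmeas.aestronglyMeasurable hAb
  have hiterint : ∀ k : ℕ, Integrable (fun x => h (T^[k] x)) μ := fun k =>
    sdc_integrable ((hgtm j).comp (hTmp.iterate k).measurable).aestronglyMeasurable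
      (fun x => hgtb j _)
  -- comparing the functional on h and on its Birkhoff average
  have havgT : Tendsto (fun n => (∫ x, f (R n x) * birkhoffAverage ℝ T h N x ∂μ)
      - ∫ x, f (R n x) * h x ∂μ) atTop (𝓝 0) := by
    have hsum0 : Tendsto (fun n => ∑ k ∈ Finset.range N,
        ((∫ x, f (R n x) * h (T^[k] x) ∂μ) - ∫ x, f (R n x) * h x ∂μ)) atTop (𝓝 0) := by
      have := tendsto_finset_sum (Finset.range N)
        (fun k _ => sdc_key2 hTmp hRmeas f hL1 (hgtm j) (hgtb j) k)
      simpa using this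
    have hmul := hsum0.const_mul ((N:ℝ)⁻¹)
    rw [mul_zero] at hmul
    refine Tendsto.congr (fun n => ?_) hmul
    have hN0 : (N:ℝ) ≠ 0 := by positivity
    have e1 : ∫ x, f (R n x) * birkhoffAverage ℝ T h N x ∂μ
        = (N:ℝ)⁻¹ * ∑ k ∈ Finset.range N, ∫ x, f (R n x) * h (T^[k] x) ∂μ := by
      rw [← integral_finset_sum _ (fun k _ => hfu n _ (hiterint k)), ← integral_const_mul]
      refine integral_congr_ae (Eventually.of_forall fun x => ?_)
      simp only [birkhoffAverage, birkhoffSum, smul_eq_mul, Finset.mul_sum]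
      exact Finset.sum_congr rfl fun k _ => by ring
    rw [Finset.sum_sub_distrib, Finset.sum_const, Finset.card_range, nsmul_eq_mul, mul_sub,
      e1, ← mul_assoc, inv_mul_cancel₀ hN0, one_mul]
  -- final estimate
  have hevent := Metric.tendsto_nhds.mp havgT δ hδpos
  filter_upwards [hevent] with n hn
  have hn' : |(∫ x, f (R n x) * birkhoffAverage ℝ T h N x ∂μ)
      - ∫ x, f (R n x) * h x ∂μ| < δ := by
    simpa [Real.dist_eq] using hn
  have e1 : ∫ x, f (R n x) * (g x - h x) ∂μ
      = (∫ x, f (R n x) * g x ∂μ) - ∫ x, f (R n x) * h x ∂μ := by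
    rw [← integral_sub (hfu n g hgi) (hfu n h (hgtint j))]
    exact integral_congr_ae (Eventually.of_forall fun x => by ring)
  have e3 : ∫ x, f (R n x) * (birkhoffAverage ℝ T h N x - c) ∂μ
      = (∫ x, f (R n x) * birkhoffAverage ℝ T h N x ∂μ) - ∫ x, f (R n x) * c ∂μ := by
    rw [← integral_sub (hfu n _ hAint) (hfu n _ (integrable_const c))]
    exact integral_congr_ae (Eventually.of_forall fun x => by ring)
  have t1 : |∫ x, f (R n x) * (g x - h x) ∂μ| ≤ B * δ := by
    refine le_trans (habs n _ (hgi.sub (hgtint j))) ?_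
    exact mul_le_mul_of_nonneg_left hgh.le hB0.le
  have t3 : |∫ x, f (R n x) * (birkhoffAverage ℝ T h N x - c) ∂μ| ≤ B * δ := by
    refine le_trans (habs n _ (hAint.sub (integrable_const c))) ?_
    exact mul_le_mul_of_nonneg_left hJN.le hB0.le
  have t4 : |∫ x, f (R n x) * c ∂μ| ≤ B * δ := by
    refine le_trans (habs n (fun _ => c) (integrable_const c)) ?_
    have h5 : ∫ _x, |c| ∂μ = |c| * (μ Set.univ).toReal := by
      rw [integral_const, smul_eq_mul, mul_comm, measureReal_def]
    rw [h5]
    exact mul_le_mul_of_nonneg_left hcm hB0.le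
  have hsplit : ∫ x, f (R n x) * g x ∂μ
      = (∫ x, f (R n x) * (g x - h x) ∂μ)
        + ((∫ x, f (R n x) * h x ∂μ) - ∫ x, f (R n x) * birkhoffAverage ℝ T h N x ∂μ)
        + (∫ x, f (R n x) * (birkhoffAverage ℝ T h N x - c) ∂μ)
        + (∫ x, f (R n x) * c ∂μ) := by
    rw [e1, e3]; ring
  rw [Real.norm_eq_abs, hsplit]
  have habs2 : |(∫ x, f (R n x) * h x ∂μ) - ∫ x, f (R n x) * birkhoffAverage ℝ T h N x ∂μ| < δ := by
    rw [abs_sub_comm]; exact hn'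
  have hBδ : B * δ = ε / 5 := by
    rw [hδdef]; field_simp
  have hδε : δ ≤ ε / 5 := by
    rw [hδdef]
    exact div_le_div_of_nonneg_left hε.le (by norm_num) (by nlinarith)
  calc |(∫ x, f (R n x) * (g x - h x) ∂μ)
        + ((∫ x, f (R n x) * h x ∂μ) - ∫ x, f (R n x) * birkhoffAverage ℝ T h N x ∂μ)
        + (∫ x, f (R n x) * (birkhoffAverage ℝ T h N x - c) ∂μ)
        + (∫ x, f (R n x) * c ∂μ)|
      ≤ |(∫ x, f (R n x) * (g x - h x) ∂μ)
        + ((∫ x, f (R n x) * h x ∂μ) - ∫ x, f (R n x) * birkhoffAverage ℝ T h N x ∂μ)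
        + (∫ x, f (R n x) * (birkhoffAverage ℝ T h N x - c) ∂μ)|
        + |∫ x, f (R n x) * c ∂μ| := abs_add_le _ _
    _ ≤ (|(∫ x, f (R n x) * (g x - h x) ∂μ)
        + ((∫ x, f (R n x) * h x ∂μ) - ∫ x, f (R n x) * birkhoffAverage ℝ T h N x ∂μ)|
        + |∫ x, f (R n x) * (birkhoffAverage ℝ T h N x - c) ∂μ|)
        + |∫ x, f (R n x) * c ∂μ| := by
          gcongr
          exact abs_add_le _ _
    _ ≤ ((|∫ x, f (R n x) * (g x - h x) ∂μ|
        + |(∫ x, f (R n x) * h x ∂μ) - ∫ x, f (R n x) * birkhoffAverage ℝ T h N x ∂μ|)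
        + |∫ x, f (R n x) * (birkhoffAverage ℝ T h N x - c) ∂μ|)
        + |∫ x, f (R n x) * c ∂μ| := by
          gcongr
          exact abs_add_le _ _
    _ ≤ ((B * δ + δ) + B * δ) + B * δ :=
        add_le_add (add_le_add (add_le_add t1 habs2.le) t3) t4
    _ = 3 * (B * δ) + δ := by ring
    _ = 3 * (ε / 5) + δ := by rw [hBδ]
    _ ≤ 3 * (ε / 5) + ε / 5 := add_le_add le_rfl hδε
    _ < ε := by linarith [hε]


/-- Convergence of the `ν`-integrals for Lipschitz test functions. -/
lemma sdc_lip {T : P → P} (hT : Ergodic T μ)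
    {R : ℕ → P → ℝ} (hRmeas : ∀ n, Measurable (R n))
    (hQ : ∀ ε : ℝ, 0 < ε → Tendsto (fun n => μ {x | ε ≤ |R n (T x) - R n x|}) atTop (𝓝 0))
    {ψ : Measure ℝ} [IsProbabilityMeasure ψ]
    {ν₀ : Measure P} [IsProbabilityMeasure ν₀] (hν₀ : ν₀ ≪ μ)
    (hconv₀ : ∀ f : ℝ →ᵇ ℝ,
      Tendsto (fun n => ∫ x, f (R n x) ∂ν₀) atTop (𝓝 (∫ y, f y ∂ψ)))
    {ν : Measure P} [IsProbabilityMeasure ν] (hν : ν ≪ μ)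
    (f : ℝ →ᵇ ℝ) {K : NNReal} (hf : LipschitzWith K ⇑f) :
    Tendsto (fun n => ∫ x, f (R n x) ∂ν) atTop (𝓝 (∫ y, f y ∂ψ)) := by
  have hTm : Measurable T := hT.toMeasurePreserving.measurable
  set g : P → ℝ := fun x => (ν.rnDeriv μ x).toReal - (ν₀.rnDeriv μ x).toReal with hg
  have hgm : Measurable g :=
    (Measure.measurable_rnDeriv ν μ).ennreal_toReal.sub
      (Measure.measurable_rnDeriv ν₀ μ).ennreal_toReal
  have hgi : Integrable g μ :=
    (Measure.integrable_toReal_rnDeriv (μ := ν) (ν := μ)).sub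
      (Measure.integrable_toReal_rnDeriv (μ := ν₀) (ν := μ))
  have hg0 : ∫ x, g x ∂μ = 0 := by
    rw [hg]
    rw [integral_sub (Measure.integrable_toReal_rnDeriv (μ := ν) (ν := μ))
      (Measure.integrable_toReal_rnDeriv (μ := ν₀) (ν := μ)),
      Measure.integral_toReal_rnDeriv hν, Measure.integral_toReal_rnDeriv hν₀]
    simp
  have hkey : ∀ n, ∫ x, f (R n x) ∂ν
      = (∫ x, f (R n x) ∂ν₀) + ∫ x, f (R n x) * g x ∂μ := by
    intro n
    have e1 : ∫ x, (ν.rnDeriv μ x).toReal • f (R n x) ∂μ = ∫ x, f (R n x) ∂ν :=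
      integral_rnDeriv_smul hν
    have e2 : ∫ x, (ν₀.rnDeriv μ x).toReal • f (R n x) ∂μ = ∫ x, f (R n x) ∂ν₀ :=
      integral_rnDeriv_smul hν₀
    have hi1 : Integrable (fun x => (ν.rnDeriv μ x).toReal • f (R n x)) μ := by
      have := (Measure.integrable_toReal_rnDeriv (μ := ν) (ν := μ)).bdd_mul
        (f.continuous.measurable.comp (hRmeas n)).aestronglyMeasurable
        (c := ‖f‖) (Eventually.of_forall fun x => f.norm_coe_le_norm _)
      refine this.congr (Eventually.of_forall fun x => ?_)
      simp [smul_eq_mul, mul_comm]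
    have hi2 : Integrable (fun x => (ν₀.rnDeriv μ x).toReal • f (R n x)) μ := by
      have := (Measure.integrable_toReal_rnDeriv (μ := ν₀) (ν := μ)).bdd_mul
        (f.continuous.measurable.comp (hRmeas n)).aestronglyMeasurable
        (c := ‖f‖) (Eventually.of_forall fun x => f.norm_coe_le_norm _)
      refine this.congr (Eventually.of_forall fun x => ?_)
      simp [smul_eq_mul, mul_comm]
    have e3 : ∫ x, f (R n x) * g x ∂μ
        = (∫ x, (ν.rnDeriv μ x).toReal • f (R n x) ∂μ)
          - ∫ x, (ν₀.rnDeriv μ x).toReal • f (R n x) ∂μ := by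
      rw [← integral_sub hi1 hi2]
      refine integral_congr_ae (Eventually.of_forall fun x => ?_)
      simp only [hg, smul_eq_mul]
      ring
    rw [e3, e1, e2]
    ring
  have hL1 := sdc_key1 hTm hRmeas hQ f hf
  have hA := sdc_keyA hT hRmeas f hL1 hgm hgi hg0
  have := (hconv₀ f).add hA
  rw [add_zero] at this
  exact this.congr fun n => (hkey n).symm


end SDCAux

/-- Strong distributional convergence (paper's Theorem 9.8, for finite measure spaces):
if `T` is an ergodic measure-preserving transformation of a nonzero finite measure space
`(P, μ)`, the differences `Q_n = R_n ∘ T - R_n` converge to zero in probability, and for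
*some* probability measure `ν₀ ≪ μ` the pushforwards `(ν₀).map (R n)` converge weakly to
the probability measure `ψ` on `ℝ`, then the same weak convergence holds for *every*
probability measure `ν ≪ μ`.  Weak convergence is expressed by integrating against
bounded continuous functions. -/
theorem strong_distributional_convergence
    {P : Type*} [MeasurableSpace P] (μ : Measure P) [IsFiniteMeasure μ] (hμ : μ ≠ 0)
    (T : P → P) (hT : Ergodic T μ)
    (R : ℕ → P → ℝ) (hRmeas : ∀ n, Measurable (R n))
    (hQ : ∀ ε : ℝ, 0 < ε →
      Tendsto (fun n => μ {x | ε ≤ |R n (T x) - R n x|}) atTop (𝓝 0))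
    (ψ : Measure ℝ) [IsProbabilityMeasure ψ]
    (ν₀ : Measure P) [IsProbabilityMeasure ν₀] (hν₀ : ν₀ ≪ μ)
    (hconv₀ : ∀ f : ℝ →ᵇ ℝ,
      Tendsto (fun n => ∫ x, f (R n x) ∂ν₀) atTop (𝓝 (∫ y, f y ∂ψ)))
    (ν : Measure P) [IsProbabilityMeasure ν] (hν : ν ≪ μ) :
    ∀ f : ℝ →ᵇ ℝ,
      Tendsto (fun n => ∫ x, f (R n x) ∂ν) atTop (𝓝 (∫ y, f y ∂ψ)) := by
  intro f
  have HL : ∀ (φ : ℝ →ᵇ ℝ) (K : NNReal), LipschitzWith K ⇑φ →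
      Tendsto (fun n => ∫ x, φ (R n x) ∂ν) atTop (𝓝 (∫ y, φ y ∂ψ)) :=
    fun φ K hφ => sdc_lip hT hRmeas hQ hν₀ hconv₀ hν φ hφ
  -- pushforward probability measures
  haveI : ∀ n, IsProbabilityMeasure (ν.map (R n)) := fun n =>
    Measure.isProbabilityMeasure_map (hRmeas n).aemeasurable
  set Pn : ℕ → ProbabilityMeasure ℝ := fun n => ⟨ν.map (R n), inferInstance⟩ with hPn
  set Ψ : ProbabilityMeasure ℝ := ⟨ψ, inferInstance⟩ with hΨ
  have hmapint : ∀ (n : ℕ) (φ : ℝ →ᵇ ℝ),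
      ∫ y, φ y ∂(ν.map (R n)) = ∫ x, φ (R n x) ∂ν := fun n φ =>
    integral_map (hRmeas n).aemeasurable φ.continuous.measurable.aestronglyMeasurable
  have key : Tendsto Pn atTop (𝓝 Ψ) := by
    apply MeasureTheory.tendsto_of_forall_isOpen_le_liminf
    intro G hG
    rcases eq_or_ne G Set.univ with rfl | hGne
    · have h1 : ∀ n, Pn n Set.univ = 1 := fun n => (Pn n).coeFn_univ
      have h2 : Ψ Set.univ = 1 := Ψ.coeFn_univ
      rw [h2]
      have : (fun i => Pn i Set.univ) = fun _ => (1:ℝ≥0) := funext h1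
      rw [this, liminf_const]
    · have hGc : Gᶜ.Nonempty := Set.nonempty_compl.mpr hGne
      have hGcc : IsClosed Gᶜ := hG.isClosed_compl
      -- the Lipschitz approximations of the indicator of G from below
      set F : ℕ → ℝ → ℝ := fun m x => min 1 (((m:ℝ)+1) * Metric.infDist x Gᶜ) with hF
      have hFcont : ∀ m, Continuous (F m) :=
        fun m => continuous_const.min (continuous_const.mul (Metric.continuous_infDist_pt Gᶜ))
      have hF01 : ∀ m x, 0 ≤ F m x ∧ F m x ≤ 1 := by
        intro m x
        constructor
        · exact le_min zero_le_one (mul_nonneg (by positivity) Metric.infDist_nonneg)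
        · exact min_le_left _ _
      have hφ : ∀ m : ℕ, ∃ φ : ℝ →ᵇ ℝ, ⇑φ = F m := by
        intro m
        refine ⟨BoundedContinuousFunction.ofNormedAddCommGroup (F m) (hFcont m) 1
          (fun x => ?_), ?_⟩
        · rw [Real.norm_eq_abs, abs_of_nonneg (hF01 m x).1]
          exact (hF01 m x).2
        · rfl
      choose φm hφm using hφ
      have hφm_lip : ∀ m, ∃ K : NNReal, LipschitzWith K ⇑(φm m) := by
        intro m
        refine ⟨‖((m:ℝ)+1)‖₊ * 1, ?_⟩
        rw [hφm m]
        have h2 : LipschitzWith (‖((m:ℝ)+1)‖₊ * 1)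
            (fun x => ((m:ℝ)+1) * Metric.infDist x Gᶜ) := by
          have h3 := (lipschitzWith_smul (β := ℝ) ((m:ℝ)+1)).comp
            (Metric.lipschitz_infDist_pt Gᶜ)
          simpa [smul_eq_mul, Function.comp_def] using h3
        exact h2.const_min 1
      have hφm_le : ∀ m (x : ℝ), φm m x ≤ Set.indicator G 1 x := by
        intro m x
        rw [hφm m]
        by_cases hx : x ∈ G
        · rw [Set.indicator_of_mem hx]
          exact (hF01 m x).2
        · have hxc : x ∈ Gᶜ := hx
          have hd : Metric.infDist x Gᶜ = 0 := Metric.infDist_zero_of_mem hxc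
          rw [Set.indicator_of_notMem hx]
          simp [hF, hd]
      -- dominated convergence of ∫ φm dψ to ψ G
      have hψG : Tendsto (fun m => ∫ x, φm m x ∂ψ) atTop (𝓝 ((ψ G).toReal)) := by
        have h1 : ∫ x, Set.indicator G (1 : ℝ → ℝ) x ∂ψ = (ψ G).toReal :=
          integral_indicator_one hG.measurableSet
        rw [← h1]
        refine tendsto_integral_of_dominated_convergence (fun _ => (1:ℝ))
          (fun m => ((φm m).continuous.measurable).aestronglyMeasurable)
          (integrable_const 1)
          (fun m => Eventually.of_forall fun x => ?_)
          (Eventually.of_forall fun x => ?_)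
        · rw [hφm m, Real.norm_eq_abs, abs_of_nonneg (hF01 m x).1]
          exact (hF01 m x).2
        · by_cases hx : x ∈ G
          · rw [Set.indicator_of_mem hx]
            have hd : 0 < Metric.infDist x Gᶜ :=
              (hGcc.notMem_iff_infDist_pos hGc).mp (by simpa using hx)
            have h2 : Tendsto (fun m : ℕ => ((m:ℝ)+1) * Metric.infDist x Gᶜ) atTop atTop := by
              refine Tendsto.atTop_mul_const hd ?_
              exact tendsto_atTop_add_const_right _ _ tendsto_natCast_atTop_atTop
            refine Tendsto.congr' ?_ tendsto_const_nhds
            filter_upwards [h2.eventually_ge_atTop 1] with m hm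
            show (1:ℝ) = φm m x
            rw [hφm m]
            exact (min_eq_left hm).symm
          · have hxc : x ∈ Gᶜ := hx
            have hd : Metric.infDist x Gᶜ = 0 := Metric.infDist_zero_of_mem hxc
            rw [Set.indicator_of_notMem hx]
            refine Tendsto.congr' (Eventually.of_forall fun m => ?_) tendsto_const_nhds
            show (0:ℝ) = φm m x
            rw [hφm m]
            simp [hF, hd]
      -- liminf bound
      have hbd : IsBoundedUnder (· ≤ ·) atTop (fun i => Pn i G) :=
        Filter.isBoundedUnder_of ⟨1, fun n => (Pn n).apply_le_one G⟩
      have hbd2 : IsBoundedUnder (· ≥ ·) atTop (fun i => Pn i G) :=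
        Filter.isBoundedUnder_of ⟨0, fun n => zero_le⟩
      rw [Filter.le_liminf_iff hbd.isCoboundedUnder_ge hbd2]
      intro b hb
      have hbΨ : (b:ℝ) < (ψ G).toReal := by
        have h1 : ((Ψ G : ℝ≥0) : ℝ≥0∞) = ψ G := Ψ.ennreal_coeFn_eq_coeFn_toMeasure G
        have h2 : (ψ G).toReal = ((Ψ G : ℝ≥0) : ℝ) := by
          rw [← h1]; exact ENNReal.coe_toReal _
        rw [h2]
        exact_mod_cast hb
      obtain ⟨m, hm⟩ := (hψG.eventually_const_lt hbΨ).exists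
      obtain ⟨K, hK⟩ := hφm_lip m
      have hconv := HL (φm m) K hK
      filter_upwards [hconv.eventually_const_lt hm] with n hn
      have hle : ∫ x, φm m (R n x) ∂ν ≤ ((ν.map (R n)) G).toReal := by
        rw [← hmapint n (φm m)]
        have h1 : ∫ y, φm m y ∂(ν.map (R n)) ≤ ∫ y, Set.indicator G (1:ℝ→ℝ) y ∂(ν.map (R n)) := by
          refine integral_mono ((φm m).integrable _) ?_ (hφm_le m)
          exact (integrable_const (1:ℝ)).indicator hG.measurableSet
        rw [integral_indicator_one hG.measurableSet] at h1
        exact h1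
      have hblt : (b:ℝ) < ((ν.map (R n)) G).toReal := lt_of_lt_of_le hn hle
      have h3 : ((Pn n G : ℝ≥0) : ℝ) = ((ν.map (R n)) G).toReal := by
        have h1 : ((Pn n G : ℝ≥0) : ℝ≥0∞) = (ν.map (R n)) G :=
          (Pn n).ennreal_coeFn_eq_coeFn_toMeasure G
        rw [← h1]; exact (ENNReal.coe_toReal _).symm
      have h4 : (b:ℝ) < ((Pn n G : ℝ≥0) : ℝ) := by rw [h3]; exact hblt
      exact_mod_cast h4
  have hfin := ProbabilityMeasure.tendsto_iff_forall_integral_tendsto.mp key f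
  have h1 : (fun n => ∫ y, f y ∂(Pn n : Measure ℝ)) = fun n => ∫ x, f (R n x) ∂ν := by
    funext n
    exact hmapint n f
  rw [h1] at hfin
  exact hfin
end

section
/- Let U be a bounded open subset of the Euclidean plane ℝ². Suppose there exist finitely many continuously differentiable curves γ₁, …, γ_N : [0,1] → ℝ² whose images cover the topological frontier ∂U of U. Then there exists a constant C > 0 such that for every ε with 0 < ε ≤ 1, the Lebesgue measure of the open ε-thickening {x ∈ ℝ² : dist(x, ∂U) < ε} of ∂U is at most C ε. -/
open MeasureTheory ENNReal NNReal

/-- If `f` is Lipschitz on `[0,1]` with constant `L`, the `ε`-thickening of its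
image has area at most `C ε` for `0 < ε ≤ 1`, with `C` independent of `ε`. -/
lemma lip_curve_thickening_bound (f : ℝ → EuclideanSpace ℝ (Fin 2)) (L : NNReal)
    (hf : LipschitzOnWith L f (Set.Icc 0 1)) :
    ∃ C : ℝ, 0 ≤ C ∧ ∀ ε : ℝ, 0 < ε → ε ≤ 1 →
      volume (Metric.thickening ε (f '' Set.Icc 0 1)) ≤ ENNReal.ofReal (C * ε) := by
  set V : ℝ≥0∞ := volume (Metric.ball (0 : EuclideanSpace ℝ (Fin 2)) 1) with hV
  have hVfin : V ≠ ⊤ := (measure_ball_lt_top).ne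
  set Vt : ℝ := V.toReal with hVt
  have hVt0 : 0 ≤ Vt := ENNReal.toReal_nonneg
  refine ⟨3 * ((L : ℝ) + 1) ^ 2 * Vt, by positivity, fun ε hε hε1 => ?_⟩
  set n : ℕ := ⌈1 / ε⌉₊ with hn
  have hεinv : (0 : ℝ) < 1 / ε := by positivity
  have hn1 : 1 ≤ n := Nat.ceil_pos.2 hεinv
  have hnpos : (0 : ℝ) < (n : ℝ) := by exact_mod_cast hn1
  have hle : 1 / ε ≤ (n : ℝ) := Nat.le_ceil _
  have h1n : 1 / (n : ℝ) ≤ ε := by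
    rw [div_le_iff₀ hnpos]
    calc (1 : ℝ) = (1 / ε) * ε := by field_simp
    _ ≤ (n : ℝ) * ε := by nlinarith
    _ = ε * n := by ring
  have hn3 : ((n : ℝ) + 1) ≤ 3 / ε := by
    have h2 : (n : ℝ) < 1 / ε + 1 := Nat.ceil_lt_add_one hεinv.le
    have h3 : (1 : ℝ) ≤ 1 / ε := by
      rw [le_div_iff₀ hε]; linarith
    have : (n : ℝ) + 1 < 1 / ε + 2 := by linarith
    have : (1 : ℝ) / ε + 2 ≤ 3 / ε := by
      have : (2 : ℝ) ≤ 2 / ε := by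
        rw [le_div_iff₀ hε]; linarith
      have h4 : (1 : ℝ) / ε + 2 / ε = 3 / ε := by ring
      linarith
    linarith
  -- the covering by balls
  have hcov : Metric.thickening ε (f '' Set.Icc 0 1) ⊆
      ⋃ k ∈ Finset.range (n + 1), Metric.ball (f ((k : ℝ) / n)) (((L : ℝ) + 1) * ε) := by
    intro x hx
    rw [Metric.mem_thickening_iff] at hx
    obtain ⟨y, ⟨t, ht, rfl⟩, hxy⟩ := hx
    obtain ⟨ht0, ht1⟩ := ht
    set k : ℕ := ⌊t * n⌋₊ with hk
    have htn0 : 0 ≤ t * n := by positivity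
    have hkle : k ≤ n := by
      have : t * n ≤ (n : ℝ) := by nlinarith
      calc k = ⌊t * n⌋₊ := rfl
      _ ≤ ⌊(n : ℝ)⌋₊ := Nat.floor_le_floor this
      _ = n := Nat.floor_natCast n
    have hklow : (k : ℝ) ≤ t * n := Nat.floor_le htn0
    have hkhigh : t * n < (k : ℝ) + 1 := Nat.lt_floor_add_one _
    have hkd1 : (k : ℝ) / n ≤ t := by rw [div_le_iff₀ hnpos]; linarith
    have hkd2 : t - (k : ℝ) / n < 1 / n := by
      rw [sub_lt_iff_lt_add, ← add_div, lt_div_iff₀ hnpos]; linarith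
    have hkmem : (k : ℝ) / n ∈ Set.Icc (0 : ℝ) 1 := by
      constructor
      · positivity
      · rw [div_le_one hnpos]; exact_mod_cast hkle
    have hdist : dist t ((k : ℝ) / n) ≤ ε := by
      rw [Real.dist_eq, abs_of_nonneg (by linarith)]
      linarith
    have hLip : dist (f t) (f ((k : ℝ) / n)) ≤ (L : ℝ) * ε := by
      calc dist (f t) (f ((k : ℝ) / n)) ≤ (L : ℝ) * dist t ((k : ℝ) / n) :=
            hf.dist_le_mul t ⟨ht0, ht1⟩ _ hkmem
      _ ≤ (L : ℝ) * ε := by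
            exact mul_le_mul_of_nonneg_left hdist (L.coe_nonneg)
    have hball : x ∈ Metric.ball (f ((k : ℝ) / n)) (((L : ℝ) + 1) * ε) := by
      rw [Metric.mem_ball]
      calc dist x (f ((k : ℝ) / n)) ≤ dist x (f t) + dist (f t) (f ((k : ℝ) / n)) :=
            dist_triangle _ _ _
      _ < ε + (L : ℝ) * ε := by linarith
      _ = ((L : ℝ) + 1) * ε := by ring
    exact Set.mem_biUnion (Finset.mem_range.2 (Nat.lt_succ_of_le hkle)) hball
  have hr0 : (0 : ℝ) ≤ ((L : ℝ) + 1) * ε := by positivity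
  have hballvol : ∀ k : ℕ,
      volume (Metric.ball (f ((k : ℝ) / n)) (((L : ℝ) + 1) * ε)) =
        ENNReal.ofReal ((((L : ℝ) + 1) * ε) ^ 2) * V := by
    intro k
    rw [Measure.addHaar_ball _ _ hr0, finrank_euclideanSpace_fin]
  calc volume (Metric.thickening ε (f '' Set.Icc 0 1))
      ≤ volume (⋃ k ∈ Finset.range (n + 1),
          Metric.ball (f ((k : ℝ) / n)) (((L : ℝ) + 1) * ε)) := measure_mono hcov
    _ ≤ ∑ k ∈ Finset.range (n + 1),
          volume (Metric.ball (f ((k : ℝ) / n)) (((L : ℝ) + 1) * ε)) :=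
        measure_biUnion_finset_le _ _
    _ = ((n : ℝ≥0∞) + 1) * (ENNReal.ofReal ((((L : ℝ) + 1) * ε) ^ 2) * V) := by
        simp [hballvol, Finset.sum_const, nsmul_eq_mul]
    _ ≤ ENNReal.ofReal (3 * ((L : ℝ) + 1) ^ 2 * Vt * ε) := by
        rw [← ENNReal.ofReal_toReal hVfin, ← hVt]
        have h1 : ((n : ℝ≥0∞) + 1) = ENNReal.ofReal ((n : ℝ) + 1) := by
          rw [ENNReal.ofReal_add (by positivity) zero_le_one]
          simp [ENNReal.ofReal_natCast]
        rw [h1, ← ENNReal.ofReal_mul (by positivity : (0:ℝ) ≤ (((L:ℝ)+1)*ε)^2),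
          ← ENNReal.ofReal_mul (by positivity : (0:ℝ) ≤ (n:ℝ)+1)]
        apply ENNReal.ofReal_le_ofReal
        have key : ((n : ℝ) + 1) * ((((L : ℝ) + 1) * ε) ^ 2 * Vt) ≤
            (3 / ε) * ((((L : ℝ) + 1) * ε) ^ 2 * Vt) := by
          apply mul_le_mul_of_nonneg_right hn3 (by positivity)
        have heq : (3 / ε) * ((((L : ℝ) + 1) * ε) ^ 2 * Vt) =
            3 * ((L : ℝ) + 1) ^ 2 * Vt * ε := by
          field_simp
        linarith

/-- The geometric estimate in the proof of the paper's Theorem 9.29 (the square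
pixel theorem): if `U` is a bounded open subset of the Euclidean plane whose
topological frontier is covered by finitely many continuously differentiable
curves `γ₁, …, γ_N : [0,1] → ℝ²`, then there is a constant `C > 0` such that for
all `0 < ε ≤ 1` the Lebesgue measure of the open `ε`-thickening of `∂U` is at
most `C ε`. -/
theorem frontier_thickening_area_bound
    (U : Set (EuclideanSpace ℝ (Fin 2)))
    (hUopen : IsOpen U) (hUbdd : Bornology.IsBounded U)
    (N : ℕ) (γ : Fin N → ℝ → EuclideanSpace ℝ (Fin 2))
    (hγ : ∀ i, ContDiffOn ℝ 1 (γ i) (Set.Icc 0 1))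
    (hcover : frontier U ⊆ ⋃ i, γ i '' Set.Icc 0 1) :
    ∃ C : ℝ, 0 < C ∧ ∀ ε : ℝ, 0 < ε → ε ≤ 1 →
      volume (Metric.thickening ε (frontier U)) ≤ ENNReal.ofReal (C * ε) := by
  -- each curve is Lipschitz on `[0,1]`
  have hlip : ∀ i, ∃ L : NNReal, LipschitzOnWith L (γ i) (Set.Icc 0 1) := by
    intro i
    have hud : UniqueDiffOn ℝ (Set.Icc (0 : ℝ) 1) := uniqueDiffOn_Icc one_pos
    have hc : ContinuousOn (fderivWithin ℝ (γ i) (Set.Icc 0 1)) (Set.Icc 0 1) :=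
      (hγ i).continuousOn_fderivWithin hud le_rfl
    obtain ⟨M, hM⟩ := isCompact_Icc.exists_bound_of_continuousOn hc
    refine ⟨M.toNNReal, (convex_Icc 0 1).lipschitzOnWith_of_nnnorm_fderivWithin_le
      ((hγ i).differentiableOn one_ne_zero) (fun x hx => ?_)⟩
    have h := hM x hx
    calc ‖fderivWithin ℝ (γ i) (Set.Icc 0 1) x‖₊
        = ‖fderivWithin ℝ (γ i) (Set.Icc 0 1) x‖.toNNReal := (norm_toNNReal).symm
      _ ≤ M.toNNReal := Real.toNNReal_mono h
  choose L hL using hlip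
  have hcurve := fun i => lip_curve_thickening_bound (γ i) (L i) (hL i)
  choose C hC0 hCbd using hcurve
  have hsum : (0:ℝ) ≤ ∑ i, C i := Finset.sum_nonneg (fun i _ => hC0 i)
  refine ⟨∑ i, C i + 1, by linarith, fun ε hε hε1 => ?_⟩
  have hmono : Metric.thickening ε (frontier U) ⊆
      ⋃ i, Metric.thickening ε (γ i '' Set.Icc 0 1) := by
    rw [← Metric.thickening_iUnion]
    exact Metric.thickening_subset_of_subset ε hcover
  calc volume (Metric.thickening ε (frontier U))
      ≤ volume (⋃ i, Metric.thickening ε (γ i '' Set.Icc 0 1)) := measure_mono hmono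
    _ ≤ ∑ i, volume (Metric.thickening ε (γ i '' Set.Icc 0 1)) := measure_iUnion_fintype_le _ _
    _ ≤ ∑ i, ENNReal.ofReal (C i * ε) := Finset.sum_le_sum (fun i _ => hCbd i ε hε hε1)
    _ = ENNReal.ofReal (∑ i, C i * ε) := by
        rw [ENNReal.ofReal_sum_of_nonneg]
        intro i _
        exact mul_nonneg (hC0 i) hε.le
    _ ≤ ENNReal.ofReal ((∑ i, C i + 1) * ε) := by
        apply ENNReal.ofReal_le_ofReal
        rw [← Finset.sum_mul]
        nlinarith [Finset.sum_nonneg (fun i (_ : i ∈ Finset.univ) => hC0 i)]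
end
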